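/- For every finite simple graph G with n=|V|≥1 and every c>0, the rescaled weighted matching partition function of G□K₂ satisfies Σ_{k=0}^{n} (4n²)^k·Z_k < 2·(4n²)^n·Z_n; equivalently, under the edge weights λ'_e = 4n²·λ_e, the total weight of all matchings is strictly less than twice the total weight of perfect matchings. -/

import Mathlib

open scoped Classical

/-- `M` is a matching of `G`: a finite set of edges of `G` that are pairwise vertex-disjoint. -/
def IsMatchingSet {α : Type*} (G : SimpleGraph α) (M : Finset (Sym2 α)) : Prop :=
  (∀ e ∈ M, e ∈ G.edgeSet) ∧ ∀ e ∈ M, ∀ f ∈ M, e ≠ f → ∀ v, v ∈ e → v ∉ f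

/-- The weight of a set of edges `M` of `G □ K₂`: `c ^ (2t)` where `t` is the number of
copy edges (edges lying within one of the two copies of `G`) in `M`. -/
noncomputable def wK2 {V : Type*} (c : ℝ) (M : Finset (Sym2 (V × Fin 2))) : ℝ :=
  c ^ (2 * (M.filter fun e => (Sym2.map Prod.snd e).IsDiag).card)

/-- `Zk G c k` is the total weight of the `k`-edge matchings of `G □ K₂`,
where copy edges have weight `c ^ 2` and rung edges have weight `1`. -/
noncomputable def Zk {V : Type*} [Fintype V] (G : SimpleGraph V) (c : ℝ) (k : ℕ) : ℝ :=
  ∑ M ∈ Finset.univ.filter (fun M : Finset (Sym2 (V × Fin 2)) =>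
      IsMatchingSet (G.boxProd (⊤ : SimpleGraph (Fin 2))) M ∧ M.card = k), wK2 c M

open Finset


private lemma sum_pair_expand {β : Type*} (P : Finset β) (g h : β → ℝ) (k : β → β → ℝ) :
    ∑ S ∈ P, ∑ S' ∈ P, (g S + h S) * ((g S' + h S') * k S S')
      = (∑ S ∈ P, ∑ S' ∈ P, g S * (g S' * k S S'))
        + (∑ S ∈ P, ∑ S' ∈ P, g S * (h S' * k S S'))
        + (∑ S ∈ P, ∑ S' ∈ P, h S * (g S' * k S S'))
        + (∑ S ∈ P, ∑ S' ∈ P, h S * (h S' * k S S')) := by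
  rw [← sum_add_distrib, ← sum_add_distrib, ← sum_add_distrib]
  refine sum_congr rfl fun S _ => ?_
  rw [← sum_add_distrib, ← sum_add_distrib, ← sum_add_distrib]
  refine sum_congr rfl fun S' _ => ?_
  ring

private lemma quad_ineq {α : Type*} (lam r t : ℝ) (hlam : 0 < lam) (ht : 0 < t)
    (h1 : 1 + t ≤ r) (h2 : 1 + 1/t + lam ≤ r * lam) (A : Finset α) :
    ∀ f : Finset α → ℝ,
      ∑ S ∈ A.powerset, ∑ S' ∈ A.powerset, f S * (f S' * (1+lam) ^ (S ∩ S').card)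
        ≤ r ^ A.card * ∑ S ∈ A.powerset, (f S)^2 * lam ^ S.card := by
  classical
  induction A using Finset.induction_on with
  | empty => intro f; simp [sq]
  | @insert a A ha ih =>
    intro f
    have hr : (0:ℝ) < r := lt_of_lt_of_le (by linarith) h1
    have hrpow : (0:ℝ) ≤ r ^ A.card := le_of_lt (pow_pos hr _)
    have hsplit : ∀ φ : Finset α → ℝ,
        ∑ S ∈ (insert a A).powerset, φ S
          = ∑ S ∈ A.powerset, φ S + ∑ S ∈ A.powerset, φ (insert a S) := by
      intro φ
      rw [Finset.sum_powerset_insert ha]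
    set g : Finset α → ℝ := fun S => f S with hg
    set h : Finset α → ℝ := fun S => f (insert a S) with hh
    have hanotmem : ∀ S ∈ A.powerset, a ∉ S := fun S hS =>
      fun hmem => ha (Finset.mem_powerset.mp hS hmem)
    have hint1 : ∀ S ∈ A.powerset, ∀ S' ∈ A.powerset,
        (S ∩ insert a S').card = (S ∩ S').card := by
      intro S hS S' hS'
      congr 1
      rw [Finset.inter_insert_of_notMem (hanotmem S hS)]
    have hint2 : ∀ S ∈ A.powerset, ∀ S' ∈ A.powerset,
        ((insert a S) ∩ S').card = (S ∩ S').card := by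
      intro S hS S' hS'
      congr 1
      rw [Finset.insert_inter_of_notMem (hanotmem S' hS')]
    have hint3 : ∀ S ∈ A.powerset, ∀ S' ∈ A.powerset,
        ((insert a S) ∩ (insert a S')).card = (S ∩ S').card + 1 := by
      intro S hS S' hS'
      have : (insert a S) ∩ (insert a S') = insert a (S ∩ S') := by
        ext x; simp [Finset.mem_insert]; tauto
      rw [this, Finset.card_insert_of_notMem
        (fun hmem => hanotmem S hS (Finset.mem_inter.mp hmem).1)]
    set Qgg := ∑ S ∈ A.powerset, ∑ S' ∈ A.powerset, g S * (g S' * (1+lam) ^ (S ∩ S').card)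
      with hQgg
    set Qgh := ∑ S ∈ A.powerset, ∑ S' ∈ A.powerset, g S * (h S' * (1+lam) ^ (S ∩ S').card)
      with hQgh
    set Qhg := ∑ S ∈ A.powerset, ∑ S' ∈ A.powerset, h S * (g S' * (1+lam) ^ (S ∩ S').card)
      with hQhg
    set Qhh := ∑ S ∈ A.powerset, ∑ S' ∈ A.powerset, h S * (h S' * (1+lam) ^ (S ∩ S').card)
      with hQhh
    have e1 : ∑ S ∈ (insert a A).powerset, ∑ S' ∈ (insert a A).powerset,
          f S * (f S' * (1+lam) ^ (S ∩ S').card)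
        = Qgg + Qgh + Qhg + (1+lam) * Qhh := by
      rw [hsplit]
      have eA : ∀ S ∈ A.powerset,
          ∑ S' ∈ (insert a A).powerset, f S * (f S' * (1+lam) ^ (S ∩ S').card)
            = (∑ S' ∈ A.powerset, g S * (g S' * (1+lam) ^ (S ∩ S').card))
              + ∑ S' ∈ A.powerset, g S * (h S' * (1+lam) ^ (S ∩ S').card) := by
        intro S hS
        rw [hsplit]
        congr 1
        exact sum_congr rfl fun S' hS' => by rw [hint1 S hS S' hS']
      have eB : ∀ S ∈ A.powerset,
          ∑ S' ∈ (insert a A).powerset, f (insert a S) * (f S' * (1+lam) ^ ((insert a S) ∩ S').card)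
            = (∑ S' ∈ A.powerset, h S * (g S' * (1+lam) ^ (S ∩ S').card))
              + (1+lam) * ∑ S' ∈ A.powerset, h S * (h S' * (1+lam) ^ (S ∩ S').card) := by
        intro S hS
        rw [hsplit, Finset.mul_sum]
        congr 1
        · exact sum_congr rfl fun S' hS' => by rw [hint2 S hS S' hS']
        · exact sum_congr rfl fun S' hS' => by rw [hint3 S hS S' hS', pow_succ]; ring
      rw [sum_congr rfl eA, sum_congr rfl eB, sum_add_distrib, sum_add_distrib,
        ← Finset.mul_sum]
      ring
    have e2 : Qgg + Qgh + Qhg + Qhh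
        = ∑ S ∈ A.powerset, ∑ S' ∈ A.powerset,
            (g S + h S) * ((g S' + h S') * (1+lam) ^ (S ∩ S').card) := by
      rw [sum_pair_expand]
    have ih1 := ih (fun S => g S + h S)
    have ih2 := ih h
    have hle1 : Qgg + Qgh + Qhg + (1+lam) * Qhh
        ≤ r ^ A.card * ((∑ S ∈ A.powerset, (g S + h S)^2 * lam ^ S.card)
            + lam * ∑ S ∈ A.powerset, (h S)^2 * lam ^ S.card) := by
      have h3 : lam * Qhh ≤ lam * (r ^ A.card * ∑ S ∈ A.powerset, (h S)^2 * lam ^ S.card) :=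
        mul_le_mul_of_nonneg_left ih2 hlam.le
      have h4 : Qgg + Qgh + Qhg + Qhh
          ≤ r ^ A.card * ∑ S ∈ A.powerset, (g S + h S)^2 * lam ^ S.card := by
        rw [e2]; exact ih1
      nlinarith [h3, h4]
    have hpt : ∀ x y : ℝ, (x + y)^2 + lam * y^2 ≤ r * x^2 + (r * lam) * y^2 := by
      intro x y
      have h2' : t * (1 + 1/t + lam) ≤ t * (r * lam) := mul_le_mul_of_nonneg_left h2 ht.le
      have htt : t * (1/t) = 1 := by field_simp
      nlinarith [sq_nonneg (t*x - y), mul_le_mul_of_nonneg_left h1 ht.le, sq_nonneg x,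
        sq_nonneg y, mul_pos ht ht]
    have hle2 : (∑ S ∈ A.powerset, (g S + h S)^2 * lam ^ S.card)
            + lam * ∑ S ∈ A.powerset, (h S)^2 * lam ^ S.card
        ≤ r * ((∑ S ∈ A.powerset, (g S)^2 * lam ^ S.card)
            + ∑ S ∈ A.powerset, (h S)^2 * (lam * lam ^ S.card)) := by
      rw [Finset.mul_sum, mul_add, Finset.mul_sum, Finset.mul_sum, ← sum_add_distrib, ← sum_add_distrib]
      refine sum_le_sum fun S _ => ?_
      have hlp : (0:ℝ) ≤ lam ^ S.card := le_of_lt (pow_pos hlam _)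
      have := hpt (g S) (h S)
      nlinarith [mul_le_mul_of_nonneg_right this hlp]
    have eR : r ^ (insert a A).card * ∑ S ∈ (insert a A).powerset, (f S)^2 * lam ^ S.card
        = r ^ A.card * (r * ((∑ S ∈ A.powerset, (g S)^2 * lam ^ S.card)
            + ∑ S ∈ A.powerset, (h S)^2 * (lam * lam ^ S.card))) := by
      rw [hsplit, Finset.card_insert_of_notMem ha, pow_succ]
      have : ∀ S ∈ A.powerset, (f (insert a S))^2 * lam ^ (insert a S).card
          = (h S)^2 * (lam * lam ^ S.card) := by
        intro S hS
        rw [Finset.card_insert_of_notMem (hanotmem S hS), pow_succ]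
        ring
      rw [sum_congr rfl this]
      ring
    rw [e1, eR]
    calc Qgg + Qgh + Qhg + (1+lam) * Qhh
        ≤ r ^ A.card * ((∑ S ∈ A.powerset, (g S + h S)^2 * lam ^ S.card)
            + lam * ∑ S ∈ A.powerset, (h S)^2 * lam ^ S.card) := hle1
      _ ≤ r ^ A.card * (r * ((∑ S ∈ A.powerset, (g S)^2 * lam ^ S.card)
            + ∑ S ∈ A.powerset, (h S)^2 * (lam * lam ^ S.card))) :=
          mul_le_mul_of_nonneg_left hle2 hrpow


private lemma exp_five_eighths_lt_two : Real.exp (5/8 : ℝ) < 2 := by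
  have h8 : Real.exp (5/8 : ℝ) ^ 8 = Real.exp 5 := by
    rw [← Real.exp_nat_mul]; norm_num
  have h5 : Real.exp (5 : ℝ) < 256 := by
    have he : Real.exp (5:ℝ) = Real.exp 1 ^ 5 := by rw [← Real.exp_nat_mul]; norm_num
    rw [he]
    have h1 := Real.exp_one_lt_d9
    have h0 := Real.exp_pos (1:ℝ)
    nlinarith [pow_pos h0 2, pow_pos h0 3, pow_pos h0 4]
  by_contra hcon
  push_neg at hcon
  have : (2:ℝ)^8 ≤ Real.exp (5/8:ℝ) ^ 8 := pow_le_pow_left₀ (by norm_num) hcon 8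
  rw [h8] at this
  norm_num at this
  linarith

private lemma r_pow_lt_two (n : ℕ) (hn : 1 ≤ n) :
    (1 + (2*(n:ℝ)+1)/(4*(n:ℝ)^2)) ^ n < 2 := by
  rcases eq_or_lt_of_le hn with h1 | h2
  · rw [← h1]; norm_num
  · have hn2 : 2 ≤ n := h2
    have hnR : (2:ℝ) ≤ (n:ℝ) := by exact_mod_cast hn2
    have hnpos : (0:ℝ) < (n:ℝ) := by linarith
    set x : ℝ := (2*(n:ℝ)+1)/(4*(n:ℝ)^2) with hx
    have hxpos : 0 < x := by positivity
    have hle : (1 + x) ^ n ≤ Real.exp ((n:ℝ) * x) := by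
      calc (1 + x) ^ n ≤ Real.exp x ^ n := by
            apply pow_le_pow_left₀ (by linarith)
            linarith [Real.add_one_le_exp x]
        _ = Real.exp ((n:ℝ) * x) := by rw [← Real.exp_nat_mul]
    have hnx : (n:ℝ) * x ≤ 5/8 := by
      rw [hx, mul_div_assoc']
      rw [div_le_div_iff₀ (by positivity) (by norm_num)]
      nlinarith
    calc (1 + x) ^ n ≤ Real.exp ((n:ℝ)*x) := hle
      _ ≤ Real.exp (5/8) := Real.exp_le_exp.mpr hnx
      _ < 2 := exp_five_eighths_lt_two



section basics
variable {α : Type*} [Fintype α]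

noncomputable def evs (e : Sym2 α) : Finset α := univ.filter (· ∈ e)

@[simp] lemma mem_evs {v : α} {e : Sym2 α} : v ∈ evs e ↔ v ∈ e := by simp [evs]

lemma card_evs {e : Sym2 α} (he : ¬ e.IsDiag) : (evs e).card = 2 := by
  induction e using Sym2.ind with
  | _ x y =>
    have hxy : x ≠ y := by simpa using he
    have : evs s(x,y) = {x, y} := by ext v; simp [Sym2.mem_iff]
    rw [this, card_insert_of_notMem (by simpa using hxy), card_singleton]

noncomputable def msupp (M : Finset (Sym2 α)) : Finset α := M.biUnion evs

lemma mem_msupp {v : α} {M : Finset (Sym2 α)} : v ∈ msupp M ↔ ∃ e ∈ M, v ∈ e := by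
  simp [msupp]

lemma card_msupp {G : SimpleGraph α} {M : Finset (Sym2 α)} (hM : IsMatchingSet G M) :
    (msupp M).card = 2 * M.card := by
  rw [msupp, card_biUnion]
  · rw [Finset.sum_congr rfl (fun e he => card_evs (G.not_isDiag_of_mem_edgeSet (hM.1 e he)))]
    rw [Finset.sum_const, smul_eq_mul, mul_comm]
  · intro e he f hf hef
    rw [Function.onFun, Finset.disjoint_left]
    intro v hv hv'
    exact hM.2 e he f hf hef v (mem_evs.mp hv) (mem_evs.mp hv')

end basics

section layers
variable {V : Type*}

noncomputable def lay (ℓ : Fin 2) (e : Sym2 V) : Sym2 (V × Fin 2) :=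
  Sym2.map (fun v => (v, ℓ)) e

noncomputable def rung (v : V) : Sym2 (V × Fin 2) := s((v,0),(v,1))

lemma mem_lay {x : V × Fin 2} {ℓ : Fin 2} {e : Sym2 V} :
    x ∈ lay ℓ e ↔ x.2 = ℓ ∧ x.1 ∈ e := by
  constructor
  · rintro hx
    obtain ⟨a, ha, rfl⟩ := Sym2.mem_map.mp hx
    exact ⟨rfl, ha⟩
  · rintro ⟨h2, h1⟩
    refine Sym2.mem_map.mpr ⟨x.1, h1, ?_⟩
    cases x; simp_all

lemma mem_rung {x : V × Fin 2} {v : V} : x ∈ rung v ↔ x.1 = v := by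
  obtain ⟨a, b⟩ := x
  have hb : b = 0 ∨ b = 1 := by omega
  simp only [rung, Sym2.mem_iff, Prod.mk.injEq]
  constructor
  · rintro (⟨h, -⟩ | ⟨h, -⟩) <;> exact h
  · rintro rfl
    rcases hb with rfl | rfl
    · left; exact ⟨rfl, rfl⟩
    · right; exact ⟨rfl, rfl⟩

lemma lay_inj (ℓ : Fin 2) : Function.Injective (lay (V := V) ℓ) :=
  Sym2.map.injective fun a b h => congrArg Prod.fst h

lemma rung_inj : Function.Injective (rung (V := V)) := by
  intro v w h
  have : (v, (0:Fin 2)) ∈ rung w := h ▸ (mem_rung.mpr rfl)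
  exact mem_rung.mp this

lemma sym2_nonempty (e : Sym2 V) : ∃ x, x ∈ e := by
  induction e using Sym2.ind with
  | _ x y => exact ⟨x, Sym2.mem_mk_left x y⟩

lemma lay_ne_lay {e f : Sym2 V} {ℓ ℓ' : Fin 2} (h : ℓ ≠ ℓ') : lay ℓ e ≠ lay ℓ' f := by
  intro hcon
  obtain ⟨x, hx⟩ := sym2_nonempty e
  have h1 : ((x, ℓ) : V × Fin 2) ∈ lay ℓ e := mem_lay.mpr ⟨rfl, hx⟩
  rw [hcon] at h1
  exact h ((mem_lay.mp h1).1)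

lemma lay_ne_rung {e : Sym2 V} {ℓ : Fin 2} {v : V} : lay ℓ e ≠ rung v := by
  intro hcon
  have h0 : ((v, (0:Fin 2)) : V × Fin 2) ∈ lay ℓ e := by rw [hcon]; exact mem_rung.mpr rfl
  have h1 : ((v, (1:Fin 2)) : V × Fin 2) ∈ lay ℓ e := by rw [hcon]; exact mem_rung.mpr rfl
  have h0' : (0 : Fin 2) = ℓ := (mem_lay.mp h0).1
  have h1' : (1 : Fin 2) = ℓ := (mem_lay.mp h1).1
  exact absurd (h0'.trans h1'.symm) (by decide)

noncomputable def decode (M1 M2 : Finset (Sym2 V)) (T : Finset V) : Finset (Sym2 (V × Fin 2)) :=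
  M1.image (lay 0) ∪ M2.image (lay 1) ∪ T.image rung

lemma card_decode (M1 M2 : Finset (Sym2 V)) (T : Finset V) :
    (decode M1 M2 T).card = M1.card + M2.card + T.card := by
  rw [decode, card_union_of_disjoint, card_union_of_disjoint]
  · rw [Finset.card_image_of_injective _ (lay_inj 0),
      Finset.card_image_of_injective _ (lay_inj 1),
      Finset.card_image_of_injective _ rung_inj]
  · rw [Finset.disjoint_left]
    rintro e he hf
    obtain ⟨e₀, -, rfl⟩ := Finset.mem_image.mp he
    obtain ⟨f₀, -, hf₀⟩ := Finset.mem_image.mp hf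
    exact lay_ne_lay (by decide) hf₀.symm
  · rw [Finset.disjoint_left]
    rintro e he hf
    obtain ⟨v, -, hv⟩ := Finset.mem_image.mp hf
    rcases Finset.mem_union.mp he with h | h
    · obtain ⟨e₀, -, rfl⟩ := Finset.mem_image.mp h
      exact lay_ne_rung hv.symm
    · obtain ⟨e₀, -, rfl⟩ := Finset.mem_image.mp h
      exact lay_ne_rung hv.symm

lemma copy_lay {ℓ : Fin 2} {e : Sym2 V} : (Sym2.map Prod.snd (lay ℓ e)).IsDiag := by
  induction e using Sym2.ind with
  | _ x y => simp [lay]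

lemma copy_rung {v : V} : ¬ (Sym2.map Prod.snd (rung v)).IsDiag := by
  simp [rung]

lemma copy_filter_decode (M1 M2 : Finset (Sym2 V)) (T : Finset V) :
    ((decode M1 M2 T).filter fun e => (Sym2.map Prod.snd e).IsDiag).card
      = M1.card + M2.card := by
  rw [decode, filter_union, filter_union]
  rw [Finset.filter_true_of_mem (fun e he => by
    obtain ⟨e₀, -, rfl⟩ := Finset.mem_image.mp he; exact copy_lay)]
  rw [Finset.filter_true_of_mem (fun e he => by
    obtain ⟨e₀, -, rfl⟩ := Finset.mem_image.mp he; exact copy_lay)]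
  rw [Finset.filter_false_of_mem (fun e he => by
    obtain ⟨v, -, rfl⟩ := Finset.mem_image.mp he; exact copy_rung)]
  rw [union_empty, card_union_of_disjoint, Finset.card_image_of_injective _ (lay_inj 0),
    Finset.card_image_of_injective _ (lay_inj 1)]
  rw [Finset.disjoint_left]
  rintro e he hf
  obtain ⟨e₀, -, rfl⟩ := Finset.mem_image.mp he
  obtain ⟨f₀, -, hf₀⟩ := Finset.mem_image.mp hf
  exact lay_ne_lay (by decide) hf₀.symm

end layers

section encdec
variable {V : Type*} (G : SimpleGraph V)

lemma lay_mem_edgeSet {e₀ : Sym2 V} (he : e₀ ∈ G.edgeSet) (ℓ : Fin 2) :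
    lay ℓ e₀ ∈ (G.boxProd (⊤ : SimpleGraph (Fin 2))).edgeSet := by
  induction e₀ using Sym2.ind with
  | _ x y =>
    rw [SimpleGraph.mem_edgeSet] at he
    have : lay ℓ s(x,y) = s((x,ℓ),(y,ℓ)) := by simp [lay]
    rw [this, SimpleGraph.mem_edgeSet, SimpleGraph.boxProd_adj]
    exact Or.inl ⟨he, rfl⟩

lemma rung_mem_edgeSet (v : V) :
    rung v ∈ (G.boxProd (⊤ : SimpleGraph (Fin 2))).edgeSet := by
  rw [rung, SimpleGraph.mem_edgeSet, SimpleGraph.boxProd_adj]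
  exact Or.inr ⟨by simp, rfl⟩

variable [Fintype V]

lemma decode_isMatching {M1 M2 : Finset (Sym2 V)} {T : Finset V}
    (h1 : IsMatchingSet G M1) (h2 : IsMatchingSet G M2)
    (hd1 : Disjoint T (msupp M1)) (hd2 : Disjoint T (msupp M2)) :
    IsMatchingSet (G.boxProd (⊤ : SimpleGraph (Fin 2))) (decode M1 M2 T) := by
  have memcase : ∀ e ∈ decode M1 M2 T,
      (∃ e₀ ∈ M1, e = lay 0 e₀) ∨ (∃ e₀ ∈ M2, e = lay 1 e₀) ∨ ∃ v ∈ T, e = rung v := by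
    intro e he
    rcases Finset.mem_union.mp he with hAB | hC
    · rcases Finset.mem_union.mp hAB with hA | hB
      · obtain ⟨e₀, h₀, rfl⟩ := Finset.mem_image.mp hA; exact Or.inl ⟨e₀, h₀, rfl⟩
      · obtain ⟨e₀, h₀, rfl⟩ := Finset.mem_image.mp hB; exact Or.inr (Or.inl ⟨e₀, h₀, rfl⟩)
    · obtain ⟨v, hv, rfl⟩ := Finset.mem_image.mp hC; exact Or.inr (Or.inr ⟨v, hv, rfl⟩)
  constructor
  · intro e he
    rcases memcase e he with ⟨e₀, h₀, rfl⟩ | ⟨e₀, h₀, rfl⟩ | ⟨v, hv, rfl⟩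
    · exact lay_mem_edgeSet G (h1.1 e₀ h₀) 0
    · exact lay_mem_edgeSet G (h2.1 e₀ h₀) 1
    · exact rung_mem_edgeSet G v
  · intro e he f hf hef x hx hx'
    have claim2 : ∀ (ℓ : Fin 2) (M : Finset (Sym2 V)) e₀ v, Disjoint T (msupp M) →
        e₀ ∈ M → v ∈ T → x ∈ lay ℓ e₀ → x ∈ rung v → False := by
      intro ℓ M e₀ v hd h₀ hv hxe hxr
      have hvx : x.1 = v := mem_rung.mp hxr
      have : x.1 ∈ msupp M := mem_msupp.mpr ⟨e₀, h₀, (mem_lay.mp hxe).2⟩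
      rw [hvx] at this
      exact Finset.disjoint_left.mp hd hv this
    have claim1 : ∀ (ℓ : Fin 2) (M : Finset (Sym2 V)) e₀ f₀, IsMatchingSet G M →
        e₀ ∈ M → f₀ ∈ M → lay ℓ e₀ ≠ lay ℓ f₀ → x ∈ lay ℓ e₀ → x ∈ lay ℓ f₀ → False := by
      intro ℓ M e₀ f₀ hM h₀ hf₀ hne hxe hxf
      exact hM.2 e₀ h₀ f₀ hf₀ (fun hc => hne (by rw [hc])) x.1
        (mem_lay.mp hxe).2 (mem_lay.mp hxf).2
    have claim3 : ∀ (ℓ ℓ' : Fin 2) e₀ f₀, ℓ ≠ ℓ' → x ∈ lay ℓ e₀ → x ∈ lay ℓ' f₀ → False := by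
      intro ℓ ℓ' e₀ f₀ hne hxe hxf
      exact hne ((mem_lay.mp hxe).1 ▸ (mem_lay.mp hxf).1 ▸ rfl)
    rcases memcase e he with ⟨e₀, h₀, rfl⟩ | ⟨e₀, h₀, rfl⟩ | ⟨v, hv, rfl⟩ <;>
      rcases memcase f hf with ⟨f₀, hf₀, hfeq⟩ | ⟨f₀, hf₀, hfeq⟩ | ⟨w, hw, hfeq⟩ <;>
        subst hfeq
    · exact claim1 0 M1 e₀ f₀ h1 h₀ hf₀ hef hx hx'
    · exact claim3 0 1 e₀ f₀ (by decide) hx hx'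
    · exact claim2 0 M1 e₀ w hd1 h₀ hw hx hx'
    · exact claim3 1 0 e₀ f₀ (by decide) hx hx'
    · exact claim1 1 M2 e₀ f₀ h2 h₀ hf₀ hef hx hx'
    · exact claim2 1 M2 e₀ w hd2 h₀ hw hx hx'
    · exact claim2 0 M1 f₀ v hd1 hf₀ hv hx' hx
    · exact claim2 1 M2 f₀ v hd2 hf₀ hv hx' hx
    · exact hef (congrArg rung ((mem_rung.mp hx).symm.trans (mem_rung.mp hx')))

lemma edge_cases {e : Sym2 (V × Fin 2)}
    (he : e ∈ (G.boxProd (⊤ : SimpleGraph (Fin 2))).edgeSet) :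
    (∃ e₀ ∈ G.edgeSet, e = lay 0 e₀) ∨ (∃ e₀ ∈ G.edgeSet, e = lay 1 e₀) ∨ ∃ v, e = rung v := by
  induction e using Sym2.ind with
  | _ x y =>
    obtain ⟨a, b⟩ := x; obtain ⟨c, d⟩ := y
    rw [SimpleGraph.mem_edgeSet, SimpleGraph.boxProd_adj] at he
    rcases he with ⟨hG, hbd⟩ | ⟨htop, hac⟩
    · simp only at hG hbd
      subst hbd
      have hlay : ∀ ℓ : Fin 2, lay ℓ s(a,c) = s((a,ℓ),(c,ℓ)) := fun ℓ => by simp [lay]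
      have hb : b = 0 ∨ b = 1 := by omega
      rcases hb with rfl | rfl
      · exact Or.inl ⟨s(a,c), (G.mem_edgeSet).mpr hG, (hlay 0).symm⟩
      · exact Or.inr (Or.inl ⟨s(a,c), (G.mem_edgeSet).mpr hG, (hlay 1).symm⟩)
    · simp only [SimpleGraph.top_adj] at htop
      simp only at hac
      subst hac
      refine Or.inr (Or.inr ⟨a, ?_⟩)
      have hb : b = 0 ∨ b = 1 := by omega
      have hd : d = 0 ∨ d = 1 := by omega
      rcases hb with rfl | rfl <;> rcases hd with rfl | rfl
      · exact absurd rfl htop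
      · rfl
      · exact Sym2.eq_swap
      · exact absurd rfl htop

end encdec

section enc2
variable {V : Type*} (G : SimpleGraph V) [Fintype V]

noncomputable def enc (ℓ : Fin 2) (M : Finset (Sym2 (V × Fin 2))) : Finset (Sym2 V) :=
  (M.filter fun e => ∀ x ∈ e, x.2 = ℓ).image (Sym2.map Prod.fst)

noncomputable def encT (M : Finset (Sym2 (V × Fin 2))) : Finset V :=
  univ.filter fun v => rung v ∈ M

lemma mapfst_lay (ℓ : Fin 2) (e₀ : Sym2 V) : Sym2.map Prod.fst (lay ℓ e₀) = e₀ := by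
  induction e₀ using Sym2.ind with
  | _ x y => simp [lay]

lemma lay_mapfst {ℓ : Fin 2} {e : Sym2 (V × Fin 2)} (h : ∀ x ∈ e, x.2 = ℓ) :
    lay ℓ (Sym2.map Prod.fst e) = e := by
  induction e using Sym2.ind with
  | _ x y =>
    have hx : x.2 = ℓ := h x (Sym2.mem_mk_left x y)
    have hy : y.2 = ℓ := h y (Sym2.mem_mk_right x y)
    obtain ⟨a, b⟩ := x; obtain ⟨c, d⟩ := y
    simp only at hx hy
    subst hx; subst hy
    simp [lay]

lemma mem_lay_all {ℓ : Fin 2} (e₀ : Sym2 V) : ∀ x ∈ lay ℓ e₀, x.2 = ℓ :=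
  fun _ hx => (mem_lay.mp hx).1

lemma enc_isMatching {M : Finset (Sym2 (V × Fin 2))}
    (hM : IsMatchingSet (G.boxProd (⊤ : SimpleGraph (Fin 2))) M) (ℓ : Fin 2) :
    IsMatchingSet G (enc ℓ M) := by
  constructor
  · intro e₀ he₀
    obtain ⟨e, he, rfl⟩ := Finset.mem_image.mp he₀
    obtain ⟨heM, hall⟩ := Finset.mem_filter.mp he
    have hedge := hM.1 e heM
    induction e using Sym2.ind with
    | _ p q =>
      rw [SimpleGraph.mem_edgeSet, SimpleGraph.boxProd_adj] at hedge
      rcases hedge with ⟨hG, -⟩ | ⟨htop, -⟩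
      · simpa using hG
      · exact absurd ((hall p (Sym2.mem_mk_left p q)).trans
          (hall q (Sym2.mem_mk_right p q)).symm) (by simpa using htop)
  · intro e₀ he₀ f₀ hf₀ hne v hv hv'
    obtain ⟨e, he, rfl⟩ := Finset.mem_image.mp he₀
    obtain ⟨f, hf, rfl⟩ := Finset.mem_image.mp hf₀
    obtain ⟨heM, halle⟩ := Finset.mem_filter.mp he
    obtain ⟨hfM, hallf⟩ := Finset.mem_filter.mp hf
    have hefne : e ≠ f := fun hc => hne (by rw [hc])
    obtain ⟨x, hx, hx1⟩ := Sym2.mem_map.mp hv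
    obtain ⟨y, hy, hy1⟩ := Sym2.mem_map.mp hv'
    have hxy : x = y := by
      have := halle x hx; have := hallf y hy
      obtain ⟨a, b⟩ := x; obtain ⟨c, d⟩ := y
      simp_all
    exact hM.2 e heM f hfM hefne x hx (hxy ▸ hy)

lemma encT_disjoint {M : Finset (Sym2 (V × Fin 2))}
    (hM : IsMatchingSet (G.boxProd (⊤ : SimpleGraph (Fin 2))) M) (ℓ : Fin 2) :
    Disjoint (encT M) (msupp (enc ℓ M)) := by
  rw [Finset.disjoint_left]
  intro v hv hv'
  have hrM : rung v ∈ M := (Finset.mem_filter.mp hv).2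
  obtain ⟨e₀, he₀, hve₀⟩ := mem_msupp.mp hv'
  obtain ⟨e, he, rfl⟩ := Finset.mem_image.mp he₀
  obtain ⟨heM, hall⟩ := Finset.mem_filter.mp he
  obtain ⟨x, hx, hx1⟩ := Sym2.mem_map.mp hve₀
  have hxeq : x = (v, ℓ) := by
    have := hall x hx
    obtain ⟨a, b⟩ := x; simp_all
  have hne : rung v ≠ e := by
    intro hc
    have h0 : ((v, (0:Fin 2)) : V × Fin 2) ∈ e := hc ▸ mem_rung.mpr rfl
    have h1 : ((v, (1:Fin 2)) : V × Fin 2) ∈ e := hc ▸ mem_rung.mpr rfl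
    have e0 : (0 : Fin 2) = ℓ := hall _ h0
    have e1 : (1 : Fin 2) = ℓ := hall _ h1
    exact absurd (e0.trans e1.symm) (by decide)
  exact hM.2 (rung v) hrM e heM hne (v, ℓ) (mem_rung.mpr rfl) (hxeq ▸ hx)

lemma decode_enc {M : Finset (Sym2 (V × Fin 2))}
    (hM : IsMatchingSet (G.boxProd (⊤ : SimpleGraph (Fin 2))) M) :
    decode (enc 0 M) (enc 1 M) (encT M) = M := by
  ext e
  constructor
  · intro he
    rcases Finset.mem_union.mp he with hAB | hC
    · rcases Finset.mem_union.mp hAB with hA | hB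
      · obtain ⟨e₀, h₀, rfl⟩ := Finset.mem_image.mp hA
        obtain ⟨e', he', rfl⟩ := Finset.mem_image.mp h₀
        obtain ⟨heM, hall⟩ := Finset.mem_filter.mp he'
        rwa [lay_mapfst hall]
      · obtain ⟨e₀, h₀, rfl⟩ := Finset.mem_image.mp hB
        obtain ⟨e', he', rfl⟩ := Finset.mem_image.mp h₀
        obtain ⟨heM, hall⟩ := Finset.mem_filter.mp he'
        rwa [lay_mapfst hall]
    · obtain ⟨v, hv, rfl⟩ := Finset.mem_image.mp hC
      exact (Finset.mem_filter.mp hv).2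
  · intro he
    rcases edge_cases G (hM.1 e he) with ⟨e₀, -, rfl⟩ | ⟨e₀, -, rfl⟩ | ⟨v, rfl⟩
    · refine Finset.mem_union.mpr (Or.inl (Finset.mem_union.mpr (Or.inl ?_)))
      refine Finset.mem_image.mpr ⟨e₀, ?_, rfl⟩
      refine Finset.mem_image.mpr ⟨lay 0 e₀, Finset.mem_filter.mpr ⟨he, mem_lay_all e₀⟩,
        mapfst_lay 0 e₀⟩
    · refine Finset.mem_union.mpr (Or.inl (Finset.mem_union.mpr (Or.inr ?_)))
      refine Finset.mem_image.mpr ⟨e₀, ?_, rfl⟩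
      refine Finset.mem_image.mpr ⟨lay 1 e₀, Finset.mem_filter.mpr ⟨he, mem_lay_all e₀⟩,
        mapfst_lay 1 e₀⟩
    · refine Finset.mem_union.mpr (Or.inr ?_)
      exact Finset.mem_image.mpr ⟨v, Finset.mem_filter.mpr ⟨Finset.mem_univ v, he⟩, rfl⟩

lemma enc_decode (M1 M2 : Finset (Sym2 V)) (T : Finset V) :
    enc 0 (decode M1 M2 T) = M1 ∧ enc 1 (decode M1 M2 T) = M2 ∧
      encT (decode M1 M2 T) = T := by
  have hfilter : ∀ ℓ : Fin 2, ∀ (A : Finset (Sym2 V)) (ℓ' : Fin 2), ℓ ≠ ℓ' →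
      ∀ e ∈ A.image (lay ℓ'), ¬ (∀ x ∈ e, x.2 = ℓ) := by
    intro ℓ A ℓ' hne e he hall
    obtain ⟨e₀, -, rfl⟩ := Finset.mem_image.mp he
    obtain ⟨x, hx⟩ := sym2_nonempty e₀
    have : ((x, ℓ') : V × Fin 2).2 = ℓ := hall _ (mem_lay.mpr ⟨rfl, hx⟩)
    exact hne this.symm
  have hrungfilter : ∀ ℓ : Fin 2, ∀ (T' : Finset V),
      ∀ e ∈ T'.image rung, ¬ (∀ x ∈ e, x.2 = ℓ) := by
    intro ℓ T' e he hall
    obtain ⟨v, -, rfl⟩ := Finset.mem_image.mp he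
    have e0 : (0 : Fin 2) = ℓ := hall (v, 0) (mem_rung.mpr rfl)
    have e1 : (1 : Fin 2) = ℓ := hall (v, 1) (mem_rung.mpr rfl)
    exact absurd (e0.trans e1.symm) (by decide)
  have htrue : ∀ (ℓ : Fin 2) (A : Finset (Sym2 V)), ∀ e ∈ A.image (lay ℓ), (∀ x ∈ e, x.2 = ℓ) := by
    intro ℓ A e he
    obtain ⟨e₀, -, rfl⟩ := Finset.mem_image.mp he
    exact mem_lay_all e₀
  have henc0 : enc 0 (decode M1 M2 T) = M1 := by
    rw [decode, enc, filter_union, filter_union,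
      Finset.filter_true_of_mem (htrue 0 M1),
      Finset.filter_false_of_mem (hfilter 0 M2 1 (by decide)),
      Finset.filter_false_of_mem (hrungfilter 0 T),
      union_empty, union_empty, Finset.image_image,
      show Sym2.map Prod.fst ∘ lay 0 = id from funext fun e₀ => mapfst_lay 0 e₀]
    exact Finset.image_id
  have henc1 : enc 1 (decode M1 M2 T) = M2 := by
    rw [decode, enc, filter_union, filter_union,
      Finset.filter_false_of_mem (hfilter 1 M1 0 (by decide)),
      Finset.filter_true_of_mem (htrue 1 M2),
      Finset.filter_false_of_mem (hrungfilter 1 T),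
      union_empty, empty_union, Finset.image_image,
      show Sym2.map Prod.fst ∘ lay 1 = id from funext fun e₀ => mapfst_lay 1 e₀]
    exact Finset.image_id
  refine ⟨henc0, henc1, ?_⟩
  · ext v
    simp only [encT, Finset.mem_filter, Finset.mem_univ, true_and]
    constructor
    · intro hv
      rcases Finset.mem_union.mp hv with hAB | hC
      · rcases Finset.mem_union.mp hAB with hA | hB
        · obtain ⟨e₀, -, he₀⟩ := Finset.mem_image.mp hA
          exact absurd he₀ lay_ne_rung
        · obtain ⟨e₀, -, he₀⟩ := Finset.mem_image.mp hB
          exact absurd he₀ lay_ne_rung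
      · obtain ⟨w, hw, hweq⟩ := Finset.mem_image.mp hC
        rwa [← rung_inj hweq]
    · intro hv
      exact Finset.mem_union.mpr (Or.inr (Finset.mem_image.mpr ⟨v, hv, rfl⟩))

end enc2


section assembly
variable {V : Type*} [Fintype V] (G : SimpleGraph V)

noncomputable def MH : Finset (Finset (Sym2 (V × Fin 2))) :=
  univ.filter fun M => IsMatchingSet (G.boxProd (⊤ : SimpleGraph (Fin 2))) M

noncomputable def TripS :
    Finset (Finset (Sym2 V) × Finset (Sym2 V) × Finset V) :=
  univ.filter fun tr => IsMatchingSet G tr.1 ∧ IsMatchingSet G tr.2.1 ∧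
    Disjoint tr.2.2 (msupp tr.1) ∧ Disjoint tr.2.2 (msupp tr.2.1)

lemma master (φ : Finset (Sym2 (V × Fin 2)) → ℝ) :
    ∑ M ∈ MH G, φ M = ∑ tr ∈ TripS G, φ (decode tr.1 tr.2.1 tr.2.2) := by
  refine Finset.sum_nbij' (fun M => (enc 0 M, enc 1 M, encT M))
    (fun tr => decode tr.1 tr.2.1 tr.2.2) ?_ ?_ ?_ ?_ ?_
  · intro M hM
    have hM' := (Finset.mem_filter.mp hM).2
    exact Finset.mem_filter.mpr ⟨Finset.mem_univ _,
      enc_isMatching G hM' 0, enc_isMatching G hM' 1,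
      encT_disjoint G hM' 0, encT_disjoint G hM' 1⟩
  · intro tr htr
    obtain ⟨-, h1, h2, hd1, hd2⟩ := Finset.mem_filter.mp htr
    exact Finset.mem_filter.mpr ⟨Finset.mem_univ _, decode_isMatching G h1 h2 hd1 hd2⟩
  · intro M hM
    exact decode_enc G (Finset.mem_filter.mp hM).2
  · intro tr htr
    obtain ⟨h0, h1, hT⟩ := enc_decode tr.1 tr.2.1 tr.2.2
    exact Prod.ext h0 (Prod.ext h1 hT)
  · intro M hM
    rw [decode_enc G (Finset.mem_filter.mp hM).2]

lemma Zk_eq (c : ℝ) (k : ℕ) :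
    Zk G c k = ∑ tr ∈ (TripS G).filter
        (fun tr => tr.1.card + tr.2.1.card + tr.2.2.card = k),
      c ^ (2 * (tr.1.card + tr.2.1.card)) := by
  rw [Zk]
  have h1 : Finset.univ.filter (fun M : Finset (Sym2 (V × Fin 2)) =>
      IsMatchingSet (G.boxProd (⊤ : SimpleGraph (Fin 2))) M ∧ M.card = k)
      = (MH G).filter (fun M => M.card = k) := by
    rw [MH, Finset.filter_filter]
  rw [h1, Finset.sum_filter, master G (fun M => if M.card = k then wK2 c M else 0)]
  have h2' : ∀ tr ∈ TripS G,
      (if (decode tr.1 tr.2.1 tr.2.2).card = k then wK2 c (decode tr.1 tr.2.1 tr.2.2) else 0)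
        = (if tr.1.card + tr.2.1.card + tr.2.2.card = k
            then c ^ (2 * (tr.1.card + tr.2.1.card)) else 0) := by
    intro tr _
    rw [card_decode]
    by_cases hk : tr.1.card + tr.2.1.card + tr.2.2.card = k
    · rw [if_pos hk, if_pos hk, wK2, copy_filter_decode]
    · rw [if_neg hk, if_neg hk]
  rw [Finset.sum_congr rfl h2', ← Finset.sum_filter]

lemma trip_card_le {tr : Finset (Sym2 V) × Finset (Sym2 V) × Finset V}
    (htr : tr ∈ TripS G) :
    tr.1.card + tr.2.1.card + tr.2.2.card ≤ Fintype.card V := by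
  obtain ⟨-, h1, h2, hd1, hd2⟩ := Finset.mem_filter.mp htr
  have key : ∀ M : Finset (Sym2 V), IsMatchingSet G M → Disjoint tr.2.2 (msupp M) →
      2 * M.card + tr.2.2.card ≤ Fintype.card V := by
    intro M hM hd
    have := card_msupp hM
    have hcard : (msupp M ∪ tr.2.2).card = 2 * M.card + tr.2.2.card := by
      rw [card_union_of_disjoint hd.symm, this]
    rw [← hcard]
    exact Finset.card_le_univ _
  have a := key tr.1 h1 hd1
  have b := key tr.2.1 h2 hd2
  omega

lemma trip_card_eq {tr : Finset (Sym2 V) × Finset (Sym2 V) × Finset V}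
    (htr : tr ∈ TripS G)
    (hk : tr.1.card + tr.2.1.card + tr.2.2.card = Fintype.card V) :
    tr.2.2 = (msupp tr.1)ᶜ ∧ tr.2.2 = (msupp tr.2.1)ᶜ := by
  obtain ⟨-, h1, h2, hd1, hd2⟩ := Finset.mem_filter.mp htr
  have key : ∀ M : Finset (Sym2 V), IsMatchingSet G M → Disjoint tr.2.2 (msupp M) →
      2 * M.card + tr.2.2.card = Fintype.card V → tr.2.2 = (msupp M)ᶜ := by
    intro M hM hd hcard
    have hu : (msupp M ∪ tr.2.2).card = Fintype.card V := by
      rw [card_union_of_disjoint hd.symm, card_msupp hM, hcard]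
    have huniv : msupp M ∪ tr.2.2 = Finset.univ :=
      Finset.eq_univ_of_card _ hu
    ext v
    simp only [Finset.mem_compl]
    constructor
    · intro hv hv'
      exact Finset.disjoint_left.mp hd hv hv'
    · intro hv
      have : v ∈ msupp M ∪ tr.2.2 := huniv ▸ Finset.mem_univ v
      rcases Finset.mem_union.mp this with h | h
      · exact absurd h hv
      · exact h
  have c1 := card_msupp h1
  have c2 := card_msupp h2
  have b1 : 2 * tr.1.card + tr.2.2.card ≤ Fintype.card V := by
    have : (msupp tr.1 ∪ tr.2.2).card = 2 * tr.1.card + tr.2.2.card := by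
      rw [card_union_of_disjoint hd1.symm, c1]
    rw [← this]; exact Finset.card_le_univ _
  have b2 : 2 * tr.2.1.card + tr.2.2.card ≤ Fintype.card V := by
    have : (msupp tr.2.1 ∪ tr.2.2).card = 2 * tr.2.1.card + tr.2.2.card := by
      rw [card_union_of_disjoint hd2.symm, c2]
    rw [← this]; exact Finset.card_le_univ _
  constructor
  · exact key tr.1 h1 hd1 (by omega)
  · exact key tr.2.1 h2 hd2 (by omega)

end assembly

section assembly2
variable {V : Type*} [Fintype V] (G : SimpleGraph V)

noncomputable def MG : Finset (Finset (Sym2 V)) := univ.filter fun M => IsMatchingSet G M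

noncomputable def fS (c lam : ℝ) (S : Finset V) : ℝ :=
  ∑ M ∈ (MG G).filter (fun M => (msupp M)ᶜ = S), (lam * c^2) ^ M.card

lemma sum_pow_powerset (lam : ℝ) (U : Finset V) :
    ∑ T ∈ U.powerset, lam ^ T.card = (1 + lam) ^ U.card := by
  calc ∑ T ∈ U.powerset, lam ^ T.card
      = ∑ T ∈ U.powerset, (∏ _ ∈ T, lam) * ∏ _ ∈ U \ T, (1:ℝ) := by
        refine sum_congr rfl fun T _ => ?_
        rw [prod_const, prod_const, one_pow, mul_one]
    _ = ∏ _ ∈ U, (lam + 1) := (Finset.prod_add _ _ _).symm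
    _ = (1 + lam) ^ U.card := by rw [prod_const, add_comm]

lemma L1 (c lam : ℝ) :
    ∑ k ∈ Finset.range (Fintype.card V + 1), lam ^ k * Zk G c k
      = ∑ tr ∈ TripS G,
          (lam*c^2) ^ tr.1.card * ((lam*c^2) ^ tr.2.1.card * lam ^ tr.2.2.card) := by
  have e1 : ∀ k, lam ^ k * Zk G c k
      = ∑ tr ∈ (TripS G).filter
          (fun tr => tr.1.card + tr.2.1.card + tr.2.2.card = k),
        lam ^ (tr.1.card + tr.2.1.card + tr.2.2.card) * c ^ (2 * (tr.1.card + tr.2.1.card)) := by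
    intro k
    rw [Zk_eq, Finset.mul_sum]
    refine sum_congr rfl fun tr htr => ?_
    rw [(Finset.mem_filter.mp htr).2]
  rw [Finset.sum_congr rfl (fun k _ => e1 k)]
  rw [Finset.sum_fiberwise_of_maps_to (fun tr htr => Finset.mem_range.mpr
    (Nat.lt_succ_of_le (trip_card_le G htr)))]
  refine sum_congr rfl fun tr _ => ?_
  rw [pow_add, pow_add, pow_mul, mul_pow, mul_pow]
  ring

lemma L2 (c lam : ℝ) :
    ∑ tr ∈ TripS G,
        (lam*c^2) ^ tr.1.card * ((lam*c^2) ^ tr.2.1.card * lam ^ tr.2.2.card)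
      = ∑ M1 ∈ MG G, ∑ M2 ∈ MG G, (lam*c^2) ^ M1.card *
          ((lam*c^2) ^ M2.card * (1+lam) ^ (((msupp M1)ᶜ ∩ (msupp M2)ᶜ).card)) := by
  have hM2 : ∀ M1 M2 : Finset (Sym2 V),
      (∑ T : Finset V, if IsMatchingSet G M1 ∧ IsMatchingSet G M2 ∧
            Disjoint T (msupp M1) ∧ Disjoint T (msupp M2)
          then (lam*c^2) ^ M1.card * ((lam*c^2) ^ M2.card * lam ^ T.card) else 0)
        = if IsMatchingSet G M1 then (if IsMatchingSet G M2
            then (lam*c^2) ^ M1.card * ((lam*c^2) ^ M2.card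
              * (1+lam) ^ (((msupp M1)ᶜ ∩ (msupp M2)ᶜ).card)) else 0) else 0 := by
    intro M1 M2
    by_cases h1 : IsMatchingSet G M1
    case neg =>
      rw [if_neg h1]
      exact Finset.sum_eq_zero fun T _ => if_neg (fun hc => h1 hc.1)
    rw [if_pos h1]
    by_cases h2 : IsMatchingSet G M2
    case neg =>
      rw [if_neg h2]
      exact Finset.sum_eq_zero fun T _ => if_neg (fun hc => h2 hc.2.1)
    rw [if_pos h2]
    have hcond : ∀ T : Finset V,
        (IsMatchingSet G M1 ∧ IsMatchingSet G M2 ∧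
            Disjoint T (msupp M1) ∧ Disjoint T (msupp M2))
          ↔ T ∈ ((msupp M1)ᶜ ∩ (msupp M2)ᶜ).powerset := by
      intro T
      rw [Finset.mem_powerset, Finset.subset_inter_iff]
      constructor
      · rintro ⟨-, -, d1, d2⟩
        constructor <;> [skip; skip] <;>
          [exact fun v hv => Finset.mem_compl.mpr (fun hc => Finset.disjoint_left.mp d1 hv hc);
           exact fun v hv => Finset.mem_compl.mpr (fun hc => Finset.disjoint_left.mp d2 hv hc)]
      · rintro ⟨s1, s2⟩
        refine ⟨h1, h2, ?_, ?_⟩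
        · exact Finset.disjoint_left.mpr fun v hv hc => Finset.mem_compl.mp (s1 hv) hc
        · exact Finset.disjoint_left.mpr fun v hv hc => Finset.mem_compl.mp (s2 hv) hc
    calc (∑ T : Finset V, if IsMatchingSet G M1 ∧ IsMatchingSet G M2 ∧
            Disjoint T (msupp M1) ∧ Disjoint T (msupp M2)
          then (lam*c^2) ^ M1.card * ((lam*c^2) ^ M2.card * lam ^ T.card) else 0)
        = (∑ T : Finset V, if T ∈ ((msupp M1)ᶜ ∩ (msupp M2)ᶜ).powerset
          then (lam*c^2) ^ M1.card * ((lam*c^2) ^ M2.card * lam ^ T.card) else 0) := by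
          exact Finset.sum_congr rfl fun T _ => if_congr (hcond T) rfl rfl
      _ = ∑ T ∈ ((msupp M1)ᶜ ∩ (msupp M2)ᶜ).powerset,
            (lam*c^2) ^ M1.card * ((lam*c^2) ^ M2.card * lam ^ T.card) := by
          rw [Finset.sum_ite_mem, Finset.univ_inter]
      _ = (lam*c^2) ^ M1.card * ((lam*c^2) ^ M2.card
            * (1+lam) ^ (((msupp M1)ᶜ ∩ (msupp M2)ᶜ).card)) := by
          rw [← Finset.mul_sum, ← Finset.mul_sum, sum_pow_powerset]
  calc ∑ tr ∈ TripS G,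
        (lam*c^2) ^ tr.1.card * ((lam*c^2) ^ tr.2.1.card * lam ^ tr.2.2.card)
      = ∑ tr : Finset (Sym2 V) × Finset (Sym2 V) × Finset V,
          if IsMatchingSet G tr.1 ∧ IsMatchingSet G tr.2.1 ∧
              Disjoint tr.2.2 (msupp tr.1) ∧ Disjoint tr.2.2 (msupp tr.2.1)
          then (lam*c^2) ^ tr.1.card * ((lam*c^2) ^ tr.2.1.card * lam ^ tr.2.2.card)
          else 0 := by
        rw [TripS, Finset.sum_filter]
    _ = ∑ M1 : Finset (Sym2 V), ∑ M2 : Finset (Sym2 V), ∑ T : Finset V,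
          (if IsMatchingSet G M1 ∧ IsMatchingSet G M2 ∧
              Disjoint T (msupp M1) ∧ Disjoint T (msupp M2)
          then (lam*c^2) ^ M1.card * ((lam*c^2) ^ M2.card * lam ^ T.card)
          else 0) := by
        rw [Fintype.sum_prod_type]
        exact Finset.sum_congr rfl fun M1 _ => by rw [Fintype.sum_prod_type]
    _ = ∑ M1 : Finset (Sym2 V),
          (if IsMatchingSet G M1 then (∑ M2 ∈ MG G, (lam*c^2) ^ M1.card *
            ((lam*c^2) ^ M2.card * (1+lam) ^ (((msupp M1)ᶜ ∩ (msupp M2)ᶜ).card))) else 0) := by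
        refine Finset.sum_congr rfl fun M1 _ => ?_
        rw [Finset.sum_congr rfl fun M2 _ => hM2 M1 M2]
        by_cases h1 : IsMatchingSet G M1
        · simp only [if_pos h1, MG, Finset.sum_filter]
        · rw [if_neg h1]
          exact Finset.sum_eq_zero fun M2 _ => by rw [if_neg h1]
    _ = ∑ M1 ∈ MG G, ∑ M2 ∈ MG G, (lam*c^2) ^ M1.card *
          ((lam*c^2) ^ M2.card * (1+lam) ^ (((msupp M1)ᶜ ∩ (msupp M2)ᶜ).card)) := by
        rw [MG, ← Finset.sum_filter]

lemma L3 (c lam : ℝ) :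
    ∑ M1 ∈ MG G, ∑ M2 ∈ MG G, (lam*c^2) ^ M1.card *
        ((lam*c^2) ^ M2.card * (1+lam) ^ (((msupp M1)ᶜ ∩ (msupp M2)ᶜ).card))
      = ∑ S : Finset V, ∑ S' : Finset V,
          fS G c lam S * (fS G c lam S' * (1+lam) ^ ((S ∩ S').card)) := by
  have inner : ∀ K : Finset V,
      ∑ M2 ∈ MG G, (lam*c^2) ^ M2.card * (1+lam) ^ ((K ∩ (msupp M2)ᶜ).card)
        = ∑ S' : Finset V, fS G c lam S' * (1+lam) ^ ((K ∩ S').card) := by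
    intro K
    rw [← Finset.sum_fiberwise_of_maps_to (g := fun M2 => (msupp M2)ᶜ)
      (t := (univ : Finset (Finset V))) (fun _ _ => Finset.mem_univ _)]
    refine Finset.sum_congr rfl fun S' _ => ?_
    rw [fS, Finset.sum_mul]
    refine Finset.sum_congr rfl fun M2 hM2 => ?_
    rw [← (Finset.mem_filter.mp hM2).2]
  calc ∑ M1 ∈ MG G, ∑ M2 ∈ MG G, (lam*c^2) ^ M1.card *
        ((lam*c^2) ^ M2.card * (1+lam) ^ (((msupp M1)ᶜ ∩ (msupp M2)ᶜ).card))
      = ∑ M1 ∈ MG G, (lam*c^2) ^ M1.card *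
          ∑ S' : Finset V, fS G c lam S' * (1+lam) ^ (((msupp M1)ᶜ ∩ S').card) := by
        refine Finset.sum_congr rfl fun M1 _ => ?_
        rw [← Finset.mul_sum, inner ((msupp M1)ᶜ)]
    _ = ∑ S : Finset V, ∑ M1 ∈ (MG G).filter (fun M1 => (msupp M1)ᶜ = S),
          (lam*c^2) ^ M1.card *
            ∑ S' : Finset V, fS G c lam S' * (1+lam) ^ (((msupp M1)ᶜ ∩ S').card) := by
        rw [Finset.sum_fiberwise_of_maps_to (g := fun M1 => (msupp M1)ᶜ)
          (t := (univ : Finset (Finset V))) (fun _ _ => Finset.mem_univ _)]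
    _ = ∑ S : Finset V, ∑ S' : Finset V,
          fS G c lam S * (fS G c lam S' * (1+lam) ^ ((S ∩ S').card)) := by
        refine Finset.sum_congr rfl fun S _ => ?_
        have : ∀ M1 ∈ (MG G).filter (fun M1 => (msupp M1)ᶜ = S),
            (lam*c^2) ^ M1.card *
              ∑ S' : Finset V, fS G c lam S' * (1+lam) ^ (((msupp M1)ᶜ ∩ S').card)
            = (lam*c^2) ^ M1.card *
              ∑ S' : Finset V, fS G c lam S' * (1+lam) ^ ((S ∩ S').card) := by
          intro M1 hM1
          rw [(Finset.mem_filter.mp hM1).2]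
        rw [Finset.sum_congr rfl this, ← Finset.sum_mul, ← fS, Finset.mul_sum]

end assembly2

section assembly3
variable {V : Type*} [Fintype V] (G : SimpleGraph V)

noncomputable def PairS : Finset (Finset (Sym2 V) × Finset (Sym2 V)) :=
  univ.filter fun p => IsMatchingSet G p.1 ∧ IsMatchingSet G p.2 ∧
    (msupp p.1)ᶜ = (msupp p.2)ᶜ

lemma R1 (c lam : ℝ) :
    lam ^ (Fintype.card V) * Zk G c (Fintype.card V)
      = ∑ S : Finset V, (fS G c lam S)^2 * lam ^ S.card := by
  rw [Zk_eq, Finset.mul_sum]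
  have step2 : ∑ tr ∈ (TripS G).filter
        (fun tr => tr.1.card + tr.2.1.card + tr.2.2.card = Fintype.card V),
      lam ^ (Fintype.card V) * c ^ (2 * (tr.1.card + tr.2.1.card))
    = ∑ p ∈ PairS G, (lam*c^2) ^ p.1.card *
        ((lam*c^2) ^ p.2.card * lam ^ ((msupp p.1)ᶜ).card) := by
    refine Finset.sum_nbij' (fun tr => (tr.1, tr.2.1))
      (fun p => (p.1, p.2, (msupp p.1)ᶜ)) ?_ ?_ ?_ ?_ ?_
    · intro tr htr
      obtain ⟨htr1, hk⟩ := Finset.mem_filter.mp htr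
      obtain ⟨-, h1, h2, -, -⟩ := Finset.mem_filter.mp htr1
      obtain ⟨e1, e2⟩ := trip_card_eq G htr1 hk
      exact Finset.mem_filter.mpr ⟨Finset.mem_univ _, h1, h2, by rw [← e1, ← e2]⟩
    · intro p hp
      obtain ⟨-, h1, h2, hkey⟩ := Finset.mem_filter.mp hp
      have hd1 : Disjoint (msupp p.1)ᶜ (msupp p.1) := disjoint_compl_left
      have hd2 : Disjoint (msupp p.1)ᶜ (msupp p.2) := by
        rw [hkey]; exact disjoint_compl_left
      refine Finset.mem_filter.mpr ⟨Finset.mem_filter.mpr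
        ⟨Finset.mem_univ _, h1, h2, hd1, hd2⟩, ?_⟩
      have c1 := card_msupp h1
      have c2 := card_msupp h2
      have hmeq : (msupp p.1).card = (msupp p.2).card := by
        have : msupp p.1 = msupp p.2 := by
          have := congrArg compl hkey
          rwa [compl_compl, compl_compl] at this
        rw [this]
      have hcc : ((msupp p.1)ᶜ).card = Fintype.card V - (msupp p.1).card :=
        Finset.card_compl _
      have hle : (msupp p.1).card ≤ Fintype.card V := Finset.card_le_univ _
      simp only
      omega
    · intro tr htr
      obtain ⟨htr1, hk⟩ := Finset.mem_filter.mp htr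
      obtain ⟨e1, -⟩ := trip_card_eq G htr1 hk
      exact Prod.ext rfl (Prod.ext rfl e1.symm)
    · intro p hp
      rfl
    · intro tr htr
      obtain ⟨htr1, hk⟩ := Finset.mem_filter.mp htr
      obtain ⟨e1, -⟩ := trip_card_eq G htr1 hk
      simp only
      rw [← e1, ← hk, pow_add, pow_add, pow_mul, mul_pow, mul_pow]
      ring
  rw [step2]
  calc ∑ p ∈ PairS G, (lam*c^2) ^ p.1.card *
        ((lam*c^2) ^ p.2.card * lam ^ ((msupp p.1)ᶜ).card)
      = ∑ M1 : Finset (Sym2 V), ∑ M2 : Finset (Sym2 V),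
          (if IsMatchingSet G M1 ∧ IsMatchingSet G M2 ∧ (msupp M1)ᶜ = (msupp M2)ᶜ
            then (lam*c^2) ^ M1.card * ((lam*c^2) ^ M2.card * lam ^ ((msupp M1)ᶜ).card)
            else 0) := by
        rw [PairS, Finset.sum_filter, Fintype.sum_prod_type]
    _ = ∑ M1 ∈ MG G, ∑ M2 ∈ (MG G).filter (fun M2 => (msupp M2)ᶜ = (msupp M1)ᶜ),
          (lam*c^2) ^ M1.card * ((lam*c^2) ^ M2.card * lam ^ ((msupp M1)ᶜ).card) := by
        conv_rhs => rw [MG]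
        conv_rhs => rw [Finset.sum_filter]
        refine Finset.sum_congr rfl fun M1 _ => ?_
        by_cases h1 : IsMatchingSet G M1
        · rw [if_pos h1, Finset.filter_filter, Finset.sum_filter]
          refine Finset.sum_congr rfl fun M2 _ => if_congr ?_ rfl rfl
          constructor
          · rintro ⟨-, a, b⟩; exact ⟨a, b.symm⟩
          · rintro ⟨a, b⟩; exact ⟨h1, a, b.symm⟩
        · rw [if_neg h1]
          exact Finset.sum_eq_zero fun M2 _ => if_neg (fun hc => h1 hc.1)
    _ = ∑ S : Finset V, ∑ M1 ∈ (MG G).filter (fun M1 => (msupp M1)ᶜ = S),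
          ∑ M2 ∈ (MG G).filter (fun M2 => (msupp M2)ᶜ = (msupp M1)ᶜ),
            (lam*c^2) ^ M1.card * ((lam*c^2) ^ M2.card * lam ^ ((msupp M1)ᶜ).card) := by
        rw [Finset.sum_fiberwise_of_maps_to (g := fun M1 => (msupp M1)ᶜ)
          (t := (univ : Finset (Finset V))) (fun _ _ => Finset.mem_univ _)]
    _ = ∑ S : Finset V, (fS G c lam S)^2 * lam ^ S.card := by
        refine Finset.sum_congr rfl fun S _ => ?_
        have hpt : ∀ M1 ∈ (MG G).filter (fun M1 => (msupp M1)ᶜ = S),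
            (∑ M2 ∈ (MG G).filter (fun M2 => (msupp M2)ᶜ = (msupp M1)ᶜ),
              (lam*c^2) ^ M1.card * ((lam*c^2) ^ M2.card * lam ^ ((msupp M1)ᶜ).card))
            = (lam*c^2) ^ M1.card * (fS G c lam S * lam ^ S.card) := by
          intro M1 hM1
          have hkey := (Finset.mem_filter.mp hM1).2
          rw [hkey, fS, Finset.sum_mul, Finset.mul_sum]
        rw [Finset.sum_congr rfl hpt, ← Finset.sum_mul, ← fS]
        ring
end assembly3


/-- For every finite simple graph `G` with `n = |V| ≥ 1` and every `c > 0`, the rescaled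
weighted matching partition function of `G □ K₂` satisfies
`Σ_{k=0}^{n} (4n²)^k·Z_k < 2·(4n²)^n·Z_n`: under edge weights `λ' = 4n²·λ`, the total
weight of all matchings is strictly less than twice the total weight of perfect matchings. -/
theorem stmt9 {V : Type*} [Fintype V] (G : SimpleGraph V) (hn : 1 ≤ Fintype.card V)
    (c : ℝ) (hc : 0 < c) :
    ∑ k ∈ Finset.range (Fintype.card V + 1),
        (4 * (Fintype.card V : ℝ) ^ 2) ^ k * Zk G c k <
      2 * (4 * (Fintype.card V : ℝ) ^ 2) ^ (Fintype.card V) * Zk G c (Fintype.card V) := by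
  classical
  set n := Fintype.card V with hn_def
  have hn1 : (1:ℝ) ≤ (n:ℝ) := by exact_mod_cast hn
  set lam : ℝ := 4 * (n:ℝ)^2 with hlam_def
  have hlam : 0 < lam := by rw [hlam_def]; nlinarith
  set t : ℝ := (2*(n:ℝ)+1)/(4*(n:ℝ)^2) with ht_def
  have ht : 0 < t := by
    rw [ht_def]
    apply div_pos <;> nlinarith
  set r : ℝ := 1 + t with hr_def
  have h2cond : 1 + 1/t + lam ≤ r * lam := by
    have e1 : 1/t = 4*(n:ℝ)^2/(2*(n:ℝ)+1) := by rw [ht_def, one_div_div]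
    have e2 : r * lam = 4*(n:ℝ)^2 + (2*(n:ℝ)+1) := by
      rw [hr_def, ht_def, hlam_def]
      field_simp
    rw [e1, e2, hlam_def]
    have hdiv : 4*(n:ℝ)^2/(2*(n:ℝ)+1) ≤ 2*(n:ℝ) := by
      rw [div_le_iff₀ (by linarith)]
      nlinarith
    linarith
  have hmain := quad_ineq lam r t hlam ht le_rfl h2cond (univ : Finset V) (fS G c lam)
  rw [Finset.powerset_univ, Finset.card_univ, ← hn_def] at hmain
  have hEq : ∑ k ∈ Finset.range (n + 1), lam ^ k * Zk G c k
      = ∑ S : Finset V, ∑ S' : Finset V,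
          fS G c lam S * (fS G c lam S' * (1+lam) ^ ((S ∩ S').card)) :=
    (L1 G c lam).trans ((L2 G c lam).trans (L3 G c lam))
  have hR : lam ^ n * Zk G c n = ∑ S : Finset V, (fS G c lam S)^2 * lam ^ S.card :=
    R1 G c lam
  have hfnonneg : ∀ S : Finset V, 0 ≤ fS G c lam S := fun S =>
    Finset.sum_nonneg fun M _ => pow_nonneg (by positivity) _
  have hfuniv : 1 ≤ fS G c lam (univ : Finset V) := by
    have hmem : (∅ : Finset (Sym2 V)) ∈ (MG G).filter
        (fun M => (msupp M)ᶜ = (univ : Finset V)) := by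
      refine Finset.mem_filter.mpr ⟨Finset.mem_filter.mpr ⟨Finset.mem_univ _, ?_, ?_⟩, ?_⟩
      · intro e he; exact absurd he (Finset.notMem_empty e)
      · intro e he; exact absurd he (Finset.notMem_empty e)
      · rw [msupp, Finset.biUnion_empty, Finset.compl_empty]
    calc (1:ℝ) = (lam*c^2) ^ (∅ : Finset (Sym2 V)).card := by simp
      _ ≤ fS G c lam (univ : Finset V) :=
          Finset.single_le_sum (f := fun M => (lam*c^2) ^ M.card)
            (fun M _ => pow_nonneg (by positivity) _) hmem
  have hNpos : 0 < ∑ S : Finset V, (fS G c lam S)^2 * lam ^ S.card := by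
    have hterm : 0 < (fS G c lam (univ : Finset V))^2 * lam ^ (univ : Finset V).card := by
      have : (0:ℝ) < fS G c lam (univ : Finset V) := lt_of_lt_of_le one_pos hfuniv
      positivity
    refine lt_of_lt_of_le hterm (Finset.single_le_sum
      (f := fun S => (fS G c lam S)^2 * lam ^ S.card) (fun S _ => ?_) (Finset.mem_univ _))
    have := hfnonneg S
    positivity
  have hrn : r ^ n < 2 := by
    rw [hr_def, ht_def]
    exact r_pow_lt_two n hn
  calc ∑ k ∈ Finset.range (n + 1), lam ^ k * Zk G c k
      = ∑ S : Finset V, ∑ S' : Finset V,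
          fS G c lam S * (fS G c lam S' * (1+lam) ^ ((S ∩ S').card)) := hEq
    _ ≤ r ^ n * ∑ S : Finset V, (fS G c lam S)^2 * lam ^ S.card := hmain
    _ < 2 * ∑ S : Finset V, (fS G c lam S)^2 * lam ^ S.card :=
        mul_lt_mul_of_pos_right hrn hNpos
    _ = 2 * (lam ^ n * Zk G c n) := by rw [hR]
    _ = 2 * lam ^ n * Zk G c n := by ring
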